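/- Let (Ω, μ) be a probability space, let A, Â : Ω → Bool be measurable, let S be a countable type with the discrete measurable structure, and let Z : Ω → S be measurable. Assume: for every a, â ∈ Bool, μ{ω | A ω = a} > 0, μ{ω | Â ω = â} > 0, and μ{ω | Â ω = â ∧ A ω = a} > 0; for every â ∈ Bool, z ∈ S, a ∈ Bool, μ[{ω | Â ω = â ∧ Z ω = z} | {ω | A ω = a}] = μ[{ω | Â ω = â} | {ω | A ω = a}] · μ[{ω | Z ω = z} | {ω | A ω = a}]; and for every z ∈ S, μ[{ω | Z ω = z} | {ω | Â ω = true}] = μ[{ω | Z ω = z} | {ω | Â ω = false}]. Then for every z ∈ S, μ[{ω | Z ω = z} | {ω | A ω = true}] · (μ[{ω | A ω = true} | {ω | Â ω = true}] − μ[{ω | A ω = true} | {ω | Â ω = false}]) = μ[{ω | Z ω = z} | {ω | A ω = false}] · (μ[{ω | A ω = false} | {ω | Â ω = false}] − μ[{ω | A ω = false} | {ω | Â ω = true}]), where the differences are taken in the real numbers (conditional probabilities regarded as reals). -/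

import Mathlib

open MeasureTheory ProbabilityTheory

lemma toReal_cond_eq' {Ω : Type*} [MeasurableSpace Ω] (μ : Measure Ω)
    {s : Set Ω} (hs : MeasurableSet s) (t : Set Ω) :
    (μ[t|s]).toReal = (μ (s ∩ t)).toReal / (μ s).toReal := by
  rw [ProbabilityTheory.cond_apply hs, ENNReal.toReal_mul, ENNReal.toReal_inv,
    div_eq_inv_mul]

/-- Equation (10) in the proof of Theorem 1 of the paper: equating the mixture
decompositions of `p(Z | Ahat = 1)` and `p(Z | Ahat = 0)` over the true sensitive
attribute `A` yields this identity (differences taken in the real numbers). -/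
theorem fairda_equation_ten
    {Ω : Type*} [MeasurableSpace Ω] (μ : Measure Ω) [IsProbabilityMeasure μ]
    {S : Type*} [MeasurableSpace S] [MeasurableSingletonClass S] [Countable S]
    (A Ahat : Ω → Bool) (hA : Measurable A) (hAhat : Measurable Ahat)
    (Z : Ω → S) (hZ : Measurable Z)
    (hposA : ∀ a : Bool, 0 < μ {ω | A ω = a})
    (hposAhat : ∀ ahat : Bool, 0 < μ {ω | Ahat ω = ahat})
    (hposAhatA : ∀ ahat a : Bool, 0 < μ {ω | Ahat ω = ahat ∧ A ω = a})
    (hCI : ∀ (ahat : Bool) (z : S) (a : Bool),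
      μ[{ω | Ahat ω = ahat ∧ Z ω = z} | {ω | A ω = a}]
        = μ[{ω | Ahat ω = ahat} | {ω | A ω = a}] * μ[{ω | Z ω = z} | {ω | A ω = a}])
    (hOpt : ∀ z : S,
      μ[{ω | Z ω = z} | {ω | Ahat ω = true}] = μ[{ω | Z ω = z} | {ω | Ahat ω = false}]) :
    ∀ z : S,
      (μ[{ω | Z ω = z} | {ω | A ω = true}]).toReal
          * ((μ[{ω | A ω = true} | {ω | Ahat ω = true}]).toReal
              - (μ[{ω | A ω = true} | {ω | Ahat ω = false}]).toReal)
        = (μ[{ω | Z ω = z} | {ω | A ω = false}]).toReal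
          * ((μ[{ω | A ω = false} | {ω | Ahat ω = false}]).toReal
              - (μ[{ω | A ω = false} | {ω | Ahat ω = true}]).toReal) := by
  intro z
  -- measurable sets
  have hmA : ∀ a : Bool, MeasurableSet {ω | A ω = a} := fun a =>
    hA (measurableSet_singleton a)
  have hmAhat : ∀ a : Bool, MeasurableSet {ω | Ahat ω = a} := fun a =>
    hAhat (measurableSet_singleton a)
  have hmZ : MeasurableSet {ω | Z ω = z} := hZ (measurableSet_singleton z)
  -- real-valued measures
  set aT : ℝ := (μ {ω | A ω = true}).toReal with haT
  set aF : ℝ := (μ {ω | A ω = false}).toReal with haF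
  set bT : ℝ := (μ {ω | Ahat ω = true}).toReal with hbT
  set bF : ℝ := (μ {ω | Ahat ω = false}).toReal with hbF
  have haTpos : 0 < aT := ENNReal.toReal_pos (hposA true).ne' (measure_ne_top μ _)
  have haFpos : 0 < aF := ENNReal.toReal_pos (hposA false).ne' (measure_ne_top μ _)
  have hbTpos : 0 < bT := ENNReal.toReal_pos (hposAhat true).ne' (measure_ne_top μ _)
  have hbFpos : 0 < bF := ENNReal.toReal_pos (hposAhat false).ne' (measure_ne_top μ _)
  -- notation for key intersections
  set k : Bool → Bool → ℝ :=
    fun a ahat => (μ ({ω | A ω = a} ∩ {ω | Ahat ω = ahat})).toReal with hk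
  set n : Bool → ℝ := fun a => (μ ({ω | A ω = a} ∩ {ω | Z ω = z})).toReal with hn
  set j : Bool → ℝ :=
    fun ahat => (μ ({ω | Ahat ω = ahat} ∩ {ω | Z ω = z})).toReal with hj
  have hset : ∀ ahat : Bool,
      {ω | Ahat ω = ahat ∧ Z ω = z} = {ω | Ahat ω = ahat} ∩ {ω | Z ω = z} := fun _ => rfl
  -- conditional independence, in real form
  have hCI' : ∀ (ahat a : Bool),
      (μ ({ω | A ω = a} ∩ ({ω | Ahat ω = ahat} ∩ {ω | Z ω = z}))).toReal
        * (μ {ω | A ω = a}).toReal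
        = k a ahat * n a := by
    intro ahat a
    have h := congrArg ENNReal.toReal (hCI ahat z a)
    rw [toReal_cond_eq' μ (hmA a), ENNReal.toReal_mul, toReal_cond_eq' μ (hmA a),
      toReal_cond_eq' μ (hmA a), hset] at h
    have hapos : (0:ℝ) < (μ {ω | A ω = a}).toReal :=
      ENNReal.toReal_pos (hposA a).ne' (measure_ne_top μ _)
    field_simp at h
    simp only [hk, hn]
    exact mul_right_cancel₀ hapos.ne' (by linear_combination (μ {ω | A ω = a}).toReal * h)
  -- decomposition over A
  have hdec : ∀ ahat : Bool,
      j ahat = (μ ({ω | A ω = true} ∩ ({ω | Ahat ω = ahat} ∩ {ω | Z ω = z}))).toReal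
        + (μ ({ω | A ω = false} ∩ ({ω | Ahat ω = ahat} ∩ {ω | Z ω = z}))).toReal := by
    intro ahat
    have hcompl : {ω | A ω = false} = {ω | A ω = true}ᶜ := by
      ext ω; simp [Bool.not_eq_true]
    have h := measure_inter_add_diff (μ := μ) ({ω | Ahat ω = ahat} ∩ {ω | Z ω = z}) (hmA true)
    have hdiff : ({ω | Ahat ω = ahat} ∩ {ω | Z ω = z}) \ {ω | A ω = true}
        = {ω | A ω = false} ∩ ({ω | Ahat ω = ahat} ∩ {ω | Z ω = z}) := by
      rw [Set.diff_eq, hcompl, Set.inter_comm]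
    rw [hdiff, Set.inter_comm _ {ω | A ω = true}] at h
    simp only [hj]
    rw [← h, ENNReal.toReal_add (measure_ne_top μ _) (measure_ne_top μ _)]
  -- mixture decomposition
  have hmix : ∀ ahat : Bool,
      j ahat = k true ahat * (n true / aT) + k false ahat * (n false / aF) := by
    intro ahat
    have h1 := hCI' ahat true
    have h2 := hCI' ahat false
    rw [hdec ahat]
    rw [← haT] at h1
    rw [← haF] at h2
    field_simp
    linear_combination aF * h1 + aT * h2
  -- optimality in real form
  have hOpt' : j true / bT = j false / bF := by
    have h := congrArg ENNReal.toReal (hOpt z)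
    rwa [toReal_cond_eq' μ (hmAhat true), toReal_cond_eq' μ (hmAhat false)] at h
  -- rewrite the goal via cond_apply
  have hgoalT : (μ[{ω | Z ω = z} | {ω | A ω = true}]).toReal = n true / aT := by
    rw [toReal_cond_eq' μ (hmA true)]
  have hgoalF : (μ[{ω | Z ω = z} | {ω | A ω = false}]).toReal = n false / aF := by
    rw [toReal_cond_eq' μ (hmA false)]
  have hcommT : ∀ a : Bool,
      (μ[{ω | A ω = a} | {ω | Ahat ω = true}]).toReal = k a true / bT := by
    intro a
    rw [toReal_cond_eq' μ (hmAhat true), Set.inter_comm]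
  have hcommF : ∀ a : Bool,
      (μ[{ω | A ω = a} | {ω | Ahat ω = false}]).toReal = k a false / bF := by
    intro a
    rw [toReal_cond_eq' μ (hmAhat false), Set.inter_comm]
  rw [hgoalT, hgoalF, hcommT true, hcommF true, hcommT false, hcommF false]
  rw [div_eq_div_iff hbTpos.ne' hbFpos.ne'] at hOpt'
  rw [hmix true, hmix false] at hOpt'
  field_simp at hOpt' ⊢
  linear_combination hOpt'
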